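/- Let (λ_n), (γ_n) be non-negative sequences, 0 < u < v ≤ 1, 1/w = 1/u − 1/v, and Γ_n = ∑_{k=1}^n γ_k. If λ_n = (1+log n)^{−bq} n^{−1} and γ_n = (1+log n)^{(−b+1/q)r} n^{r/p−1} with q < r < p and b > 1/q, u = q/p, v = r/p, then ∑_{n=1}^∞ λ_n (∑_{k=n}^∞ λ_k)^{w/v} max_{k ≤ n}(k^v/Γ_k)^{w/v} = ∑_{n=1}^∞ 1/((1+log n)·n) = ∞ up to equivalence; in particular this sum diverges. Consequently, by the Bennett–Grosse-Erdmann criterion, the inequality (∑_n λ_n (∑_{k=1}^n a_k)^u)^{1/u} ≲ (∑_n γ_n a_n^v)^{1/v} fails for some non-negative non-increasing sequence (a_n). -/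

import Mathlib

open scoped ENNReal

/-- The weight `λ_n = (1+log n)^{−bq} n^{−1}`. -/
noncomputable def lamSeq (b q : ℝ) (n : ℕ) : ℝ≥0∞ :=
  ENNReal.ofReal ((1 + Real.log (n:ℝ)) ^ (-(b*q))) * ((n:ℝ≥0∞))⁻¹

/-- The weight `γ_n = (1+log n)^{(−b+1/q)r} n^{r/p−1}`. -/
noncomputable def gamSeq (b q r p : ℝ) (n : ℕ) : ℝ≥0∞ :=
  ENNReal.ofReal ((1 + Real.log (n:ℝ)) ^ ((-b + 1/q)*r)) * ((n:ℝ≥0∞)) ^ (r/p - 1)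

/-- `Γ_n = ∑_{k=1}^n γ_k`. -/
noncomputable def GamSum (b q r p : ℝ) (n : ℕ) : ℝ≥0∞ :=
  ∑ k ∈ Finset.Icc 1 n, gamSeq b q r p k


open Real Finset

namespace BGEaux

noncomputable def Lb (B : ℝ) (n : ℕ) : ℝ := B + Real.log n

variable {B : ℝ}

lemma one_le_Lb (hB : 1 ≤ B) (n : ℕ) : 1 ≤ Lb B n := by
  have h : 0 ≤ Real.log n := by
    rcases Nat.eq_zero_or_pos n with h | h
    · simp [h]
    · exact Real.log_nonneg (by exact_mod_cast h)
  unfold Lb; linarith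

lemma Lb_pos (hB : 1 ≤ B) (n : ℕ) : 0 < Lb B n := lt_of_lt_of_le one_pos (one_le_Lb hB n)

lemma Lb_mono (hB : 1 ≤ B) : Monotone (Lb B) := by
  intro m n hmn
  unfold Lb
  rcases Nat.eq_zero_or_pos m with h | h
  · simp [h]
    rcases Nat.eq_zero_or_pos n with h' | h'
    · simp [h']
    · exact Real.log_nonneg (by exact_mod_cast h')
  · have : (0:ℝ) < m := by exact_mod_cast h
    have := Real.log_le_log this (Nat.cast_le.mpr hmn)
    linarith

lemma Lb_one (n : ℕ) : Lb B 1 = B := by simp [Lb]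

lemma Lb_zero : Lb B 0 = B := by simp [Lb]

lemma Lb_succ_le (hB : 1 ≤ B) (n : ℕ) : Lb B (n+1) ≤ Lb B n + 1 := by
  unfold Lb
  rcases Nat.eq_zero_or_pos n with h | h
  · simp [h]
  · have hn : (0:ℝ) < n := by exact_mod_cast h
    have h1 : Real.log ((n:ℝ)+1) - Real.log n = Real.log (((n:ℝ)+1)/n) := by
      rw [Real.log_div (by positivity) (ne_of_gt hn)]
    have h2 : Real.log (((n:ℝ)+1)/n) ≤ ((n:ℝ)+1)/n - 1 :=
      Real.log_le_sub_one_of_pos (by positivity)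
    have h3 : ((n:ℝ)+1)/n - 1 = 1/n := by field_simp; ring
    have h4 : (1:ℝ)/n ≤ 1 := by
      rw [div_le_one hn]; exact_mod_cast h
    push_cast
    linarith

lemma Lb_le_two_mul (hB : 1 ≤ B) (n : ℕ) : Lb B (n+1) ≤ 2 * Lb B n := by
  have := Lb_succ_le hB n
  have := one_le_Lb hB n
  linarith

lemma Lb_step_le (hB : 1 ≤ B) {n : ℕ} (hn : 1 ≤ n) : Lb B (n+1) - Lb B n ≤ 1/n := by
  have hn' : (0:ℝ) < n := by exact_mod_cast hn
  have h1 : Real.log ((n:ℝ)+1) - Real.log n = Real.log (((n:ℝ)+1)/n) := by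
    rw [Real.log_div (by positivity) (ne_of_gt hn')]
  have h2 : Real.log (((n:ℝ)+1)/n) ≤ ((n:ℝ)+1)/n - 1 :=
    Real.log_le_sub_one_of_pos (by positivity)
  have h3 : ((n:ℝ)+1)/n - 1 = 1/n := by field_simp; ring
  unfold Lb; push_cast; linarith

lemma Lb_step_ge (hB : 1 ≤ B) {n : ℕ} (hn : 1 ≤ n) :
    1/((n:ℝ)+1) ≤ Lb B (n+1) - Lb B n := by
  have hn' : (0:ℝ) < n := by exact_mod_cast hn
  -- log x ≥ 1 - 1/x with x = (n+1)/n
  have hx : (0:ℝ) < ((n:ℝ)+1)/n := by positivity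
  have h2 : Real.log (((n:ℝ)+1)/n)⁻¹ ≤ (((n:ℝ)+1)/n)⁻¹ - 1 :=
    Real.log_le_sub_one_of_pos (by positivity)
  rw [Real.log_inv] at h2
  have h1 : Real.log ((n:ℝ)+1) - Real.log n = Real.log (((n:ℝ)+1)/n) := by
    rw [Real.log_div (by positivity) (ne_of_gt hn')]
  have h3 : (((n:ℝ)+1)/n)⁻¹ = n/((n:ℝ)+1) := by field_simp
  have h4 : 1 - (n:ℝ)/((n:ℝ)+1) = 1/((n:ℝ)+1) := by field_simp; ring
  unfold Lb; push_cast
  rw [h3] at h2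
  linarith

lemma Lb_lt_succ (hB : 1 ≤ B) {n : ℕ} (hn : 1 ≤ n) : Lb B n < Lb B (n+1) := by
  have := Lb_step_ge hB hn
  have hp : (0:ℝ) < 1/((n:ℝ)+1) := by positivity
  linarith

lemma rpow_mvt {x y : ℝ} (hx : 0 < x) (hxy : x < y) (t : ℝ) :
    ∃ c, x ≤ c ∧ c ≤ y ∧ y ^ t - x ^ t = t * c ^ (t-1) * (y - x) := by
  have hcont : ContinuousOn (fun z : ℝ => z ^ t) (Set.Icc x y) := by
    intro z hz
    exact (Real.continuousAt_rpow_const z t (Or.inl (ne_of_gt (lt_of_lt_of_le hx hz.1)))).continuousWithinAt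
  have hderiv : ∀ z ∈ Set.Ioo x y, HasDerivAt (fun z : ℝ => z ^ t) (t * z ^ (t-1)) z := by
    intro z hz
    have := Real.hasDerivAt_rpow_const (x := z) (p := t) (Or.inl (ne_of_gt (lt_trans hx hz.1)))
    simpa using this
  obtain ⟨c, hc, heq⟩ := exists_hasDerivAt_eq_slope (fun z : ℝ => z ^ t)
    (fun z => t * z ^ (t-1)) hxy hcont hderiv
  refine ⟨c, hc.1.le, hc.2.le, ?_⟩
  have hyx : y - x ≠ 0 := sub_ne_zero.mpr (ne_of_gt hxy)
  field_simp at heq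
  linarith [heq]


-- step lemma for tail lower bound
lemma step_tail (hB : 1 ≤ B) {β : ℝ} (hβ : 1 < β) {k : ℕ} (hk : 1 ≤ k) :
    Lb B k ^ (1-β) - Lb B (k+1) ^ (1-β) ≤ (β - 1) * (Lb B k ^ (-β)) / k := by
  obtain ⟨c, hc1, hc2, heq⟩ := rpow_mvt (Lb_pos hB k) (Lb_lt_succ hB hk) (1-β)
  have hxpos := Lb_pos hB k
  have hc0 : 0 < c := lt_of_lt_of_le hxpos hc1
  have hcpow : c ^ (1-β-1) ≤ Lb B k ^ (-β) := by
    have he : (1-β-1 : ℝ) = -β := by ring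
    rw [he]
    exact Real.rpow_le_rpow_of_nonpos hxpos hc1 (by linarith)
  have hΔ : Lb B (k+1) - Lb B k ≤ 1/k := Lb_step_le hB hk
  have hΔ0 : 0 ≤ Lb B (k+1) - Lb B k := le_of_lt (by linarith [Lb_lt_succ hB hk])
  have hk0 : (0:ℝ) < k := by exact_mod_cast hk
  have h1 : Lb B k ^ (1-β) - Lb B (k+1) ^ (1-β)
      = (β-1) * (c ^ (1-β-1) * (Lb B (k+1) - Lb B k)) := by linear_combination -heq
  have hB0 : 0 ≤ Lb B k ^ (-β) := Real.rpow_nonneg hxpos.le _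
  have h2 : c ^ (1-β-1) * (Lb B (k+1) - Lb B k) ≤ Lb B k ^ (-β) * (1/k) :=
    mul_le_mul hcpow hΔ hΔ0 hB0
  have h3 : (β-1) * (c ^ (1-β-1) * (Lb B (k+1) - Lb B k))
      ≤ (β-1) * (Lb B k ^ (-β) * (1/k)) :=
    mul_le_mul_of_nonneg_left h2 (by linarith)
  rw [h1]
  calc (β-1) * (c ^ (1-β-1) * (Lb B (k+1) - Lb B k))
      ≤ (β-1) * (Lb B k ^ (-β) * (1/k)) := h3
    _ = (β - 1) * (Lb B k ^ (-β)) / k := by ring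

-- step lemma for convergence upper bound
lemma step_conv (hB : 1 ≤ B) {β : ℝ} (hβ : 1 < β) {k : ℕ} (hk : 1 ≤ k) :
    (β - 1) * (Lb B (k+1) ^ (-β)) / ((k:ℝ)+1) ≤ Lb B k ^ (1-β) - Lb B (k+1) ^ (1-β) := by
  obtain ⟨c, hc1, hc2, heq⟩ := rpow_mvt (Lb_pos hB k) (Lb_lt_succ hB hk) (1-β)
  have hxpos := Lb_pos hB k
  have hypos := Lb_pos hB (k+1)
  have hc0 : 0 < c := lt_of_lt_of_le hxpos hc1
  have hcpow : Lb B (k+1) ^ (-β) ≤ c ^ (1-β-1) := by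
    have he : (1-β-1 : ℝ) = -β := by ring
    rw [he]
    exact Real.rpow_le_rpow_of_nonpos hc0 hc2 (by linarith)
  have hΔ : 1/((k:ℝ)+1) ≤ Lb B (k+1) - Lb B k := Lb_step_ge hB hk
  have hk0 : (0:ℝ) < k := by exact_mod_cast hk
  have h1 : Lb B k ^ (1-β) - Lb B (k+1) ^ (1-β)
      = (β-1) * (c ^ (1-β-1) * (Lb B (k+1) - Lb B k)) := by linear_combination -heq
  have hy0 : 0 ≤ Lb B (k+1) ^ (-β) := Real.rpow_nonneg hypos.le _
  have h2 : Lb B (k+1) ^ (-β) * (1/((k:ℝ)+1)) ≤ c ^ (1-β-1) * (Lb B (k+1) - Lb B k) :=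
    mul_le_mul hcpow hΔ (by positivity) (Real.rpow_nonneg hc0.le _)
  calc (β - 1) * (Lb B (k+1) ^ (-β)) / ((k:ℝ)+1)
      = (β-1) * (Lb B (k+1) ^ (-β) * (1/((k:ℝ)+1))) := by ring
    _ ≤ (β-1) * (c ^ (1-β-1) * (Lb B (k+1) - Lb B k)) :=
        mul_le_mul_of_nonneg_left h2 (by linarith)
    _ = Lb B k ^ (1-β) - Lb B (k+1) ^ (1-β) := h1.symm

-- step lemma for partial sum lower bound
lemma step_partial (hB : 1 ≤ B) {s : ℝ} (hs : s < 1) {k : ℕ} (hk : 1 ≤ k) :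
    Lb B (k+1) ^ (1-s) - Lb B k ^ (1-s)
      ≤ (1-s) * 2 ^ |s| * (Lb B k ^ (-s)) / k := by
  obtain ⟨c, hc1, hc2, heq⟩ := rpow_mvt (Lb_pos hB k) (Lb_lt_succ hB hk) (1-s)
  have hxpos := Lb_pos hB k
  have hypos := Lb_pos hB (k+1)
  have hc0 : 0 < c := lt_of_lt_of_le hxpos hc1
  have h2pow : (1:ℝ) ≤ 2 ^ |s| := by
    rw [show (1:ℝ) = 2 ^ (0:ℝ) by simp]
    exact Real.rpow_le_rpow_of_exponent_le one_le_two (abs_nonneg s)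
  have hx0 : 0 ≤ Lb B k ^ (-s) := Real.rpow_nonneg hxpos.le _
  have hcpow : c ^ (1-s-1) ≤ 2 ^ |s| * Lb B k ^ (-s) := by
    have he : (1-s-1 : ℝ) = -s := by ring
    rw [he]
    rcases le_or_gt 0 s with hs0 | hs0
    · have h1 : c ^ (-s) ≤ Lb B k ^ (-s) :=
        Real.rpow_le_rpow_of_nonpos hxpos hc1 (by linarith)
      nlinarith
    · have h1 : c ^ (-s) ≤ (2 * Lb B k) ^ (-s) := by
        apply Real.rpow_le_rpow hc0.le (le_trans hc2 (Lb_le_two_mul hB k)) (by linarith)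
      have h2 : (2 * Lb B k) ^ (-s) = 2 ^ (-s) * Lb B k ^ (-s) :=
        Real.mul_rpow (by norm_num) hxpos.le
      have h3 : (2:ℝ) ^ (-s) = 2 ^ |s| := by rw [abs_of_neg hs0]
      rw [h2, h3] at h1
      exact h1
  have hΔ : Lb B (k+1) - Lb B k ≤ 1/k := Lb_step_le hB hk
  have hΔ0 : 0 ≤ Lb B (k+1) - Lb B k := le_of_lt (by linarith [Lb_lt_succ hB hk])
  have hk0 : (0:ℝ) < k := by exact_mod_cast hk
  have h2 : c ^ (1-s-1) * (Lb B (k+1) - Lb B k) ≤ (2 ^ |s| * Lb B k ^ (-s)) * (1/k) :=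
    mul_le_mul hcpow hΔ hΔ0 (by positivity)
  calc Lb B (k+1) ^ (1-s) - Lb B k ^ (1-s)
      = (1-s) * (c ^ (1-s-1) * (Lb B (k+1) - Lb B k)) := by linear_combination heq
    _ ≤ (1-s) * ((2 ^ |s| * Lb B k ^ (-s)) * (1/k)) :=
        mul_le_mul_of_nonneg_left h2 (by linarith)
    _ = (1-s) * 2 ^ |s| * (Lb B k ^ (-s)) / k := by ring

-- step lemma for log divergence
lemma step_log (hB : 1 ≤ B) {k : ℕ} (hk : 1 ≤ k) :
    Real.log (Lb B (k+1)) - Real.log (Lb B k) ≤ 1 / ((k:ℝ) * Lb B k) := by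
  have hxpos := Lb_pos hB k
  have hypos := Lb_pos hB (k+1)
  have hk0 : (0:ℝ) < k := by exact_mod_cast hk
  have h1 : Real.log (Lb B (k+1)) - Real.log (Lb B k)
      = Real.log (Lb B (k+1) / Lb B k) := by
    rw [Real.log_div (ne_of_gt hypos) (ne_of_gt hxpos)]
  have h2 : Real.log (Lb B (k+1) / Lb B k) ≤ Lb B (k+1) / Lb B k - 1 :=
    Real.log_le_sub_one_of_pos (by positivity)
  have h3 : Lb B (k+1) / Lb B k - 1 = (Lb B (k+1) - Lb B k) / Lb B k := by
    field_simp
  have hΔ : Lb B (k+1) - Lb B k ≤ 1/k := Lb_step_le hB hk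
  have h4 : (Lb B (k+1) - Lb B k) / Lb B k ≤ (1/(k:ℝ)) / Lb B k := by gcongr
  calc Real.log (Lb B (k+1)) - Real.log (Lb B k)
      = Real.log (Lb B (k+1) / Lb B k) := h1
    _ ≤ Lb B (k+1) / Lb B k - 1 := h2
    _ = (Lb B (k+1) - Lb B k) / Lb B k := h3
    _ ≤ (1/(k:ℝ)) / Lb B k := h4
    _ = 1 / ((k:ℝ) * Lb B k) := by rw [div_div]

-- step lemma for power difference (Γ estimate)
lemma step_pow {v : ℝ} (hv0 : 0 < v) (hv1 : v ≤ 1) {k : ℕ} (hk : 2 ≤ k) :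
    v * (k:ℝ) ^ (v-1) ≤ (k:ℝ) ^ v - ((k:ℝ)-1) ^ v := by
  have hk1 : (1:ℝ) ≤ (k:ℝ) - 1 := by
    have : (2:ℝ) ≤ k := by exact_mod_cast hk
    linarith
  have hx : (0:ℝ) < (k:ℝ) - 1 := by linarith
  obtain ⟨c, hc1, hc2, heq⟩ := rpow_mvt hx (by linarith : (k:ℝ)-1 < k) v
  have hc0 : 0 < c := lt_of_lt_of_le hx hc1
  have hcpow : (k:ℝ) ^ (v-1) ≤ c ^ (v-1) :=
    Real.rpow_le_rpow_of_nonpos hc0 hc2 (by linarith)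
  have h1 : (k:ℝ) ^ v - ((k:ℝ)-1) ^ v = v * c ^ (v-1) := by
    rw [heq]; ring
  rw [h1]
  exact mul_le_mul_of_nonneg_left hcpow hv0.le

-- step lemma for log-power decay (Γ estimate)
lemma step_gam (hB : 1 ≤ B) {d : ℝ} (hd : 0 < d) {m : ℕ} (hm : 1 ≤ m) :
    Lb B m ^ (-d) - Lb B (m+1) ^ (-d)
      ≤ d * 2 ^ (d+1) * (Lb B (m+1) ^ (-d)) / (((m:ℝ)+1) * Lb B m) := by
  obtain ⟨c, hc1, hc2, heq⟩ := rpow_mvt (Lb_pos hB m) (Lb_lt_succ hB hm) (-d)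
  have hxpos := Lb_pos hB m
  have hypos := Lb_pos hB (m+1)
  have hc0 : 0 < c := lt_of_lt_of_le hxpos hc1
  have hm0 : (0:ℝ) < m := by exact_mod_cast hm
  -- c ^ (-d-1) ≤ 2^d * Lb B (m+1) ^(-d) / Lb B m
  have hkey : c ^ (-d-1) ≤ 2 ^ d * Lb B (m+1) ^ (-d) / Lb B m := by
    have e1 : c ^ (-d-1) ≤ Lb B m ^ (-d-1) :=
      Real.rpow_le_rpow_of_nonpos hxpos hc1 (by linarith)
    have e2 : Lb B m ^ (-d-1) = Lb B m ^ (-d) * (Lb B m)⁻¹ := by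
      rw [show (-d-1:ℝ) = -d + (-1) by ring, Real.rpow_add hxpos, Real.rpow_neg_one]
    have e3 : Lb B m ^ (-d) ≤ (Lb B (m+1) / 2) ^ (-d) := by
      apply Real.rpow_le_rpow_of_nonpos (by positivity) ?_ (by linarith)
      have := Lb_le_two_mul hB m
      linarith
    have e4 : (Lb B (m+1) / 2) ^ (-d) = Lb B (m+1) ^ (-d) * 2 ^ d := by
      rw [Real.div_rpow hypos.le (by norm_num), Real.rpow_neg (by norm_num : (0:ℝ) ≤ 2)]
      field_simp
    calc c ^ (-d-1) ≤ Lb B m ^ (-d) * (Lb B m)⁻¹ := by rw [← e2]; exact e1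
      _ ≤ (Lb B (m+1) ^ (-d) * 2 ^ d) * (Lb B m)⁻¹ := by
          apply mul_le_mul_of_nonneg_right _ (by positivity)
          rw [← e4]; exact e3
      _ = 2 ^ d * Lb B (m+1) ^ (-d) / Lb B m := by ring
  have hΔ : Lb B (m+1) - Lb B m ≤ 1/m := Lb_step_le hB hm
  have hΔ0 : 0 ≤ Lb B (m+1) - Lb B m := le_of_lt (by linarith [Lb_lt_succ hB hm])
  have h1 : Lb B m ^ (-d) - Lb B (m+1) ^ (-d)
      = d * (c ^ (-d-1) * (Lb B (m+1) - Lb B m)) := by linear_combination -heq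
  have h2 : c ^ (-d-1) * (Lb B (m+1) - Lb B m)
      ≤ (2 ^ d * Lb B (m+1) ^ (-d) / Lb B m) * (1/m) :=
    mul_le_mul hkey hΔ hΔ0 (by positivity)
  have h3 : (1:ℝ)/m ≤ 2/((m:ℝ)+1) := by
    have hm1 : (1:ℝ) ≤ m := by exact_mod_cast hm
    rw [div_le_div_iff₀ hm0 (by positivity)]
    linarith
  have h4 : (2 ^ d * Lb B (m+1) ^ (-d) / Lb B m) * (1/m)
      ≤ (2 ^ d * Lb B (m+1) ^ (-d) / Lb B m) * (2/((m:ℝ)+1)) :=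
    mul_le_mul_of_nonneg_left h3 (by positivity)
  calc Lb B m ^ (-d) - Lb B (m+1) ^ (-d)
      = d * (c ^ (-d-1) * (Lb B (m+1) - Lb B m)) := h1
    _ ≤ d * ((2 ^ d * Lb B (m+1) ^ (-d) / Lb B m) * (2/((m:ℝ)+1))) :=
        mul_le_mul_of_nonneg_left (le_trans h2 h4) hd.le
    _ = d * (2 ^ d * 2) * (Lb B (m+1) ^ (-d)) / (((m:ℝ)+1) * Lb B m) := by
        field_simp
    _ = d * 2 ^ (d+1) * (Lb B (m+1) ^ (-d)) / (((m:ℝ)+1) * Lb B m) := by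
        rw [Real.rpow_add (by norm_num : (0:ℝ) < 2), Real.rpow_one]


-- T1: tail sum lower bound
lemma sum_tail_ge (hB : 1 ≤ B) {β : ℝ} (hβ : 1 < β) {n : ℕ} (hn : 1 ≤ n) (N : ℕ) :
    Lb B n ^ (1-β) - Lb B (N+1) ^ (1-β)
      ≤ (β-1) * ∑ k ∈ Finset.Icc n N, Lb B k ^ (-β) / k := by
  induction N with
  | zero =>
    rw [show Finset.Icc n 0 = ∅ from Finset.Icc_eq_empty (by omega)]
    simp only [Finset.sum_empty, mul_zero]
    have h := Real.rpow_le_rpow_of_nonpos (Lb_pos hB 1) (Lb_mono hB hn) (by linarith : (1:ℝ)-β ≤ 0)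
    linarith
  | succ N ih =>
    rcases le_or_gt n (N+1) with h | h
    · rw [Finset.sum_Icc_succ_top h, mul_add]
      have hstep := step_tail hB hβ (show 1 ≤ N+1 by omega)
      rw [mul_div_assoc] at hstep
      linarith
    · rw [show Finset.Icc n (N+1) = ∅ from Finset.Icc_eq_empty (by omega)]
      simp only [Finset.sum_empty, mul_zero]
      have hm : Lb B (N+1+1) ≤ Lb B n := Lb_mono hB (by omega)
      have h := Real.rpow_le_rpow_of_nonpos (Lb_pos hB (N+1+1)) hm (by linarith : (1:ℝ)-β ≤ 0)
      linarith

-- T2: convergence upper bound (scaled by (β-1))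
lemma sum_conv_le (hB : 1 ≤ B) {β : ℝ} (hβ : 1 < β) (N : ℕ) :
    (β-1) * ∑ k ∈ Finset.Icc 1 N, Lb B k ^ (-β) / k
      ≤ (β-1) * B ^ (-β) + (B ^ (1-β) - Lb B N ^ (1-β)) := by
  have hBpos : (0:ℝ) < B := by linarith
  have hB0 : 0 ≤ B ^ (-β) := Real.rpow_nonneg hBpos.le _
  induction N with
  | zero =>
    rw [show Finset.Icc 1 0 = ∅ from Finset.Icc_eq_empty (by omega)]
    simp only [Finset.sum_empty, mul_zero, Lb_zero, sub_self, add_zero]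
    nlinarith
  | succ N ih =>
    rcases Nat.eq_zero_or_pos N with h0 | h1
    · subst h0
      rw [show Finset.Icc 1 1 = {1} from rfl, Finset.sum_singleton]
      have e1 : Lb B (0+1) = B := by simp [Lb]
      rw [e1]
      norm_num
    · rw [Finset.sum_Icc_succ_top (by omega : 1 ≤ N+1), mul_add]
      have hstep := step_conv hB hβ h1
      have hms : (β-1) * (Lb B (N+1) ^ (-β) / ((N+1:ℕ):ℝ)) ≤ Lb B N ^ (1-β) - Lb B (N+1) ^ (1-β) := by
        push_cast
        calc (β-1) * (Lb B (N+1) ^ (-β) / ((N:ℝ)+1)) = (β - 1) * (Lb B (N+1) ^ (-β)) / ((N:ℝ)+1) := by ring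
          _ ≤ _ := hstep
      linarith

-- T3: partial sum lower bound
lemma sum_partial_ge (hB : 1 ≤ B) {s : ℝ} (hs : s < 1) (N : ℕ) :
    Lb B (N+1) ^ (1-s) - B ^ (1-s)
      ≤ ((1-s) * 2 ^ |s|) * ∑ k ∈ Finset.Icc 1 N, Lb B k ^ (-s) / k := by
  induction N with
  | zero =>
    rw [show Finset.Icc 1 0 = ∅ from Finset.Icc_eq_empty (by omega)]
    have e1 : Lb B (0+1) = B := by simp [Lb]
    rw [e1]
    simp
  | succ N ih =>
    rw [Finset.sum_Icc_succ_top (by omega : 1 ≤ N+1), mul_add]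
    have hstep := step_partial hB hs (show 1 ≤ N+1 by omega)
    rw [mul_div_assoc] at hstep
    linarith

-- T4: log divergence lower bound
lemma sum_log_ge (hB : 1 ≤ B) (N : ℕ) :
    Real.log (Lb B (N+1)) - Real.log B
      ≤ ∑ k ∈ Finset.Icc 1 N, 1 / ((k:ℝ) * Lb B k) := by
  induction N with
  | zero =>
    rw [show Finset.Icc 1 0 = ∅ from Finset.Icc_eq_empty (by omega)]
    have e1 : Lb B (0+1) = B := by simp [Lb]
    rw [e1]
    simp
  | succ N ih =>
    rw [Finset.sum_Icc_succ_top (by omega : 1 ≤ N+1)]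
    have hstep := step_log hB (show 1 ≤ N+1 by omega)
    push_cast at hstep ⊢
    linarith

-- exists large L
lemma exists_Lb_ge (hB : 1 ≤ B) (M : ℝ) (n₀ : ℕ) : ∃ N : ℕ, n₀ ≤ N ∧ M ≤ Lb B (N+1) := by
  refine ⟨max n₀ ⌈Real.exp M⌉₊, le_max_left _ _, ?_⟩
  have h1 : Real.exp M ≤ (max n₀ ⌈Real.exp M⌉₊ + 1 : ℕ) := by
    have := Nat.le_ceil (Real.exp M)
    have h2 : (⌈Real.exp M⌉₊ : ℝ) ≤ (max n₀ ⌈Real.exp M⌉₊ + 1 : ℕ) := by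
      have : ⌈Real.exp M⌉₊ ≤ max n₀ ⌈Real.exp M⌉₊ + 1 :=
        le_trans (le_max_right n₀ _) (Nat.le_succ _)
      exact_mod_cast this
    linarith
  have h3 : M ≤ Real.log ((max n₀ ⌈Real.exp M⌉₊ + 1 : ℕ)) := by
    calc M = Real.log (Real.exp M) := (Real.log_exp M).symm
      _ ≤ _ := Real.log_le_log (Real.exp_pos M) h1
  unfold Lb
  push_cast at h3 ⊢
  linarith


-- T5: Gamma sum upper bound
lemma sum_gam_le (hB : 1 ≤ B) {d v : ℝ} (hd : 0 < d) (hv0 : 0 < v) (hv1 : v ≤ 1)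
    {k₀ : ℕ} (hk₀1 : 1 ≤ k₀)
    (hk₀ : ∀ m : ℕ, k₀ ≤ m → d * 2^(d+1) / Lb B m ≤ v/2) (n : ℕ) :
    ∑ k ∈ Finset.Icc 1 n, (k:ℝ)^(v-1) * Lb B k ^ (-d)
      ≤ (∑ k ∈ Finset.Icc 1 k₀, (k:ℝ)^(v-1) * Lb B k ^ (-d))
        + (2/v) * (n:ℝ)^v * Lb B n ^ (-d) := by
  have hC0 : 0 ≤ ∑ k ∈ Finset.Icc 1 k₀, (k:ℝ)^(v-1) * Lb B k ^ (-d) := by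
    apply Finset.sum_nonneg
    intro i hi
    have := Lb_pos hB i
    positivity
  induction n with
  | zero =>
    rw [show Finset.Icc 1 0 = ∅ from Finset.Icc_eq_empty (by omega)]
    simp only [Finset.sum_empty, Nat.cast_zero]
    rw [Real.zero_rpow (ne_of_gt hv0)]
    simp only [mul_zero, zero_mul, add_zero]
    linarith
  | succ n ih =>
    rcases le_or_gt (n+1) k₀ with h | h
    · have hsub : Finset.Icc 1 (n+1) ⊆ Finset.Icc 1 k₀ := Finset.Icc_subset_Icc_right h
      have h1 : ∑ k ∈ Finset.Icc 1 (n+1), (k:ℝ)^(v-1) * Lb B k ^ (-d)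
          ≤ ∑ k ∈ Finset.Icc 1 k₀, (k:ℝ)^(v-1) * Lb B k ^ (-d) :=
        Finset.sum_le_sum_of_subset_of_nonneg hsub
          (fun i _hi _h2 => by have := Lb_pos hB i; positivity)
      have hpos : 0 ≤ (2/v) * ((n+1:ℕ):ℝ)^v * Lb B (n+1) ^ (-d) := by
        have := Lb_pos hB (n+1); positivity
      push_cast at hpos ⊢
      push_cast at h1
      linarith
    · have hn1 : 1 ≤ n := by omega
      rw [Finset.sum_Icc_succ_top (by omega : 1 ≤ n+1)]
      push_cast
      push_cast at ih
      have hLn := Lb_pos hB n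
      have hLn1 := Lb_pos hB (n+1)
      set nn : ℝ := (n:ℝ) with hnn
      have hnn0 : (0:ℝ) < nn := by rw [hnn]; exact_mod_cast Nat.pos_of_ne_zero (by omega)
      set P : ℝ := (nn+1)^(v-1) with hP
      set Q : ℝ := Lb B (n+1) ^ (-d) with hQ
      set Y : ℝ := Lb B n ^ (-d) with hY
      have hP0 : 0 ≤ P := Real.rpow_nonneg (by linarith) _
      have hQ0 : 0 ≤ Q := Real.rpow_nonneg hLn1.le _
      have hY0 : 0 ≤ Y := Real.rpow_nonneg hLn.le _
      -- A1
      have A1 : v * P ≤ (nn+1)^v - nn^v := by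
        have := step_pow hv0 hv1 (show 2 ≤ n+1 by omega)
        push_cast at this
        rw [show ((n:ℝ)+1)-1 = (n:ℝ) from by ring] at this
        exact this
      -- A2
      have A2 : Y - Q ≤ d * 2^(d+1) * Q / ((nn+1) * Lb B n) := by
        have := step_gam hB hd hn1
        push_cast at this
        exact this
      -- A3
      have A3 : nn^v ≤ (nn+1) * P := by
        have e3 : (nn+1)^v = P * (nn+1) := by
          rw [hP, ← Real.rpow_add_one (by positivity : nn+1 ≠ 0)]
          norm_num
        have h3 : nn^v ≤ (nn+1)^v := Real.rpow_le_rpow hnn0.le (by linarith) hv0.le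
        rw [e3] at h3
        linarith
      have A4 : d * 2^(d+1) / Lb B n ≤ v/2 := hk₀ n (by omega)
      have hA2r : 0 ≤ d * 2^(d+1) * Q / ((nn+1) * Lb B n) := by positivity
      have C1 : nn^v * (Y - Q) ≤ ((nn+1) * P) * (d * 2^(d+1) * Q / ((nn+1) * Lb B n)) := by
        calc nn^v * (Y - Q) ≤ nn^v * (d * 2^(d+1) * Q / ((nn+1) * Lb B n)) :=
              mul_le_mul_of_nonneg_left A2 (by positivity)
          _ ≤ ((nn+1) * P) * (d * 2^(d+1) * Q / ((nn+1) * Lb B n)) :=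
              mul_le_mul_of_nonneg_right A3 hA2r
      have C2 : ((nn+1) * P) * (d * 2^(d+1) * Q / ((nn+1) * Lb B n))
          = P * Q * (d * 2^(d+1) / Lb B n) := by
        field_simp
      have C3 : P * Q * (d * 2^(d+1) / Lb B n) ≤ P * Q * (v/2) :=
        mul_le_mul_of_nonneg_left A4 (by positivity)
      have C4 : (v * P) * Q ≤ ((nn+1)^v - nn^v) * Q :=
        mul_le_mul_of_nonneg_right A1 hQ0
      have E1 : v * (P*Q) - (v/2) * (P*Q) ≤ (nn+1)^v * Q - nn^v * Y := by
        rw [C2] at C1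
        nlinarith [C1, C3, C4]
      have E2 : (2/v) * (v * (P*Q) - (v/2) * (P*Q)) = P * Q := by
        field_simp
        ring
      have E3 : (2/v) * (v * (P*Q) - (v/2) * (P*Q)) ≤ (2/v) * ((nn+1)^v * Q - nn^v * Y) :=
        mul_le_mul_of_nonneg_left E1 (by positivity)
      have key : P * Q + (2/v) * nn^v * Y ≤ (2/v) * (nn+1)^v * Q := by
        rw [E2] at E3
        nlinarith [E3]
      linarith [ih, key]

lemma lamSeq_eq {b q : ℝ} {n : ℕ} (hn : 1 ≤ n) :
    lamSeq b q n = ENNReal.ofReal (Lb 1 n ^ (-(b*q)) / n) := by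
  have hn' : (0:ℝ) < n := by exact_mod_cast hn
  unfold lamSeq
  rw [show ((n:ℝ≥0∞))⁻¹ = (ENNReal.ofReal (n:ℝ))⁻¹ by rw [ENNReal.ofReal_natCast],
    ← ENNReal.ofReal_inv_of_pos hn',
    ← ENNReal.ofReal_mul (Real.rpow_nonneg (by
      have : (0:ℝ) ≤ Real.log n := Real.log_natCast_nonneg n
      linarith) _)]
  rw [div_eq_mul_inv]
  rfl

lemma gamSeq_eq {b q r p : ℝ} {n : ℕ} (hn : 1 ≤ n) :
    gamSeq b q r p n
      = ENNReal.ofReal ((n:ℝ) ^ (r/p-1) * Lb 1 n ^ (-((b-1/q)*r))) := by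
  have hn' : (0:ℝ) < n := by exact_mod_cast hn
  unfold gamSeq
  rw [show ((-b + 1/q)*r) = -((b-1/q)*r) by ring]
  rw [show ((n:ℝ≥0∞)) = ENNReal.ofReal (n:ℝ) by rw [ENNReal.ofReal_natCast],
    ENNReal.ofReal_rpow_of_pos hn',
    ← ENNReal.ofReal_mul (Real.rpow_nonneg (by
      have : (0:ℝ) ≤ Real.log n := Real.log_natCast_nonneg n
      linarith) _)]
  rw [mul_comm]
  rfl

lemma GamSum_eq {b q r p : ℝ} (n : ℕ) :
    GamSum b q r p n
      = ENNReal.ofReal (∑ k ∈ Finset.Icc 1 n, (k:ℝ) ^ (r/p-1) * Lb 1 k ^ (-((b-1/q)*r))) := by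
  unfold GamSum
  rw [ENNReal.ofReal_sum_of_nonneg]
  · apply Finset.sum_congr rfl
    intro k hk
    exact gamSeq_eq (Finset.mem_Icc.mp hk).1
  · intro k hk
    have hk1 := (Finset.mem_Icc.mp hk).1
    have hk' : (0:ℝ) < k := by exact_mod_cast hk1
    have hL : 0 < Lb 1 k := by
      have : (0:ℝ) ≤ Real.log k := Real.log_natCast_nonneg k
      unfold Lb; linarith
    positivity

lemma one_le_one' : (1:ℝ) ≤ 1 := le_refl 1

lemma Lb_one_pos (n : ℕ) : 0 < Lb 1 n := Lb_pos one_le_one' n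

lemma Icc_split {n₀ N : ℕ} (hn₀ : 1 ≤ n₀) (h : n₀ - 1 ≤ N) (f : ℕ → ℝ) :
    ∑ k ∈ Finset.Icc 1 (n₀-1), f k + ∑ k ∈ Finset.Icc n₀ N, f k
      = ∑ k ∈ Finset.Icc 1 N, f k := by
  have e1 : Finset.Icc 1 (n₀-1) = Finset.Ioc 0 (n₀-1) := Finset.Icc_add_one_left_eq_Ioc 0 _
  have e2 : Finset.Icc n₀ N = Finset.Ioc (n₀-1) N := by
    rw [show n₀ = (n₀-1)+1 by omega]
    exact Finset.Icc_add_one_left_eq_Ioc _ _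
  have e3 : Finset.Icc 1 N = Finset.Ioc 0 N := Finset.Icc_add_one_left_eq_Ioc 0 _
  rw [e1, e2, e3]
  exact Finset.sum_Ioc_consecutive f (Nat.zero_le _) h

lemma tsum_top {c : ℝ} (hc : 0 < c) {n₀ : ℕ} (hn₀ : 1 ≤ n₀) {f : ℕ → ℝ≥0∞}
    (hf : ∀ n : ℕ, n₀ ≤ n → ENNReal.ofReal (c / (n * Lb 1 n)) ≤ f n) :
    ∑' n, f n = ⊤ := by
  by_contra hne
  set S := ∑' n, f n with hS
  obtain ⟨N, hN1, hN2⟩ := exists_Lb_ge one_le_one'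
    (Real.exp ((∑ k ∈ Finset.Icc 1 (n₀-1), 1/((k:ℝ) * Lb 1 k)) + (S.toReal + 1)/c)) n₀
  set M : ℝ := (∑ k ∈ Finset.Icc 1 (n₀-1), 1/((k:ℝ) * Lb 1 k)) + (S.toReal + 1)/c with hM
  have hlog : M ≤ Real.log (Lb 1 (N+1)) := by
    calc M = Real.log (Real.exp M) := (Real.log_exp M).symm
      _ ≤ _ := Real.log_le_log (Real.exp_pos M) hN2
  have h4 := sum_log_ge one_le_one' N
  rw [Real.log_one, sub_zero] at h4
  have hsplit : (∑ k ∈ Finset.Icc 1 (n₀-1), 1/((k:ℝ) * Lb 1 k))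
      + ∑ k ∈ Finset.Icc n₀ N, 1/((k:ℝ) * Lb 1 k)
      = ∑ k ∈ Finset.Icc 1 N, 1/((k:ℝ) * Lb 1 k) :=
    Icc_split hn₀ (by omega : n₀ - 1 ≤ N) _
  have h5 : (S.toReal + 1)/c ≤ ∑ k ∈ Finset.Icc n₀ N, 1/((k:ℝ) * Lb 1 k) := by
    rw [hM] at hlog; linarith
  have h6 : ENNReal.ofReal (c * ((S.toReal + 1)/c)) ≤ S := by
    have hcs : c * ((S.toReal + 1)/c) ≤ c * ∑ k ∈ Finset.Icc n₀ N, 1/((k:ℝ) * Lb 1 k) :=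
      mul_le_mul_of_nonneg_left h5 hc.le
    calc ENNReal.ofReal (c * ((S.toReal + 1)/c))
        ≤ ENNReal.ofReal (c * ∑ k ∈ Finset.Icc n₀ N, 1/((k:ℝ) * Lb 1 k)) :=
          ENNReal.ofReal_le_ofReal hcs
      _ = ENNReal.ofReal (∑ k ∈ Finset.Icc n₀ N, c/((k:ℝ) * Lb 1 k)) := by
          rw [Finset.mul_sum]
          congr 1
          apply Finset.sum_congr rfl
          intro k _
          ring
      _ = ∑ k ∈ Finset.Icc n₀ N, ENNReal.ofReal (c/((k:ℝ) * Lb 1 k)) := by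
          apply ENNReal.ofReal_sum_of_nonneg
          intro k hk
          have hk1 := (Finset.mem_Icc.mp hk).1
          have hk' : (0:ℝ) < k := by exact_mod_cast le_trans hn₀ hk1
          have := Lb_one_pos k
          positivity
      _ ≤ ∑ k ∈ Finset.Icc n₀ N, f k := by
          apply Finset.sum_le_sum
          intro k hk
          exact hf k (Finset.mem_Icc.mp hk).1
      _ ≤ S := ENNReal.sum_le_tsum _
  have h7 : c * ((S.toReal + 1)/c) = S.toReal + 1 := by field_simp
  rw [h7] at h6
  have h8 := (ENNReal.ofReal_le_iff_le_toReal hne).mp h6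
  linarith

lemma block_lower {β : ℝ} (hbq : 1 < β) {n : ℕ} (hn : 1 ≤ n) :
    (1 - 3^(1-β))/(β-1) * Lb 1 n ^ (1-β)
      ≤ ∑ k ∈ Finset.Icc n (8*n^3), Lb 1 k ^ (-β)/k := by
  have hLn := Lb_one_pos n
  have hn' : (0:ℝ) < n := by exact_mod_cast hn
  have h3L : 3 * Lb 1 n ≤ Lb 1 (8*n^3+1) := by
    have hexp2 : Real.exp 2 = Real.exp 1 * Real.exp 1 := by
      rw [← Real.exp_add]; norm_num
    have e2 : Real.exp 2 ≤ 8 := by nlinarith [Real.exp_one_lt_d9, Real.exp_pos 1]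
    have hlog8 : (2:ℝ) ≤ Real.log 8 := by
      calc (2:ℝ) = Real.log (Real.exp 2) := (Real.log_exp 2).symm
        _ ≤ Real.log 8 := Real.log_le_log (Real.exp_pos 2) e2
    have hlog8n : Real.log (8*(n:ℝ)^3) = Real.log 8 + 3*Real.log n := by
      rw [Real.log_mul (by norm_num) (by positivity), Real.log_pow]
      push_cast; ring
    have hlogN : Real.log 8 + 3*Real.log n ≤ Real.log ((8*n^3+1 : ℕ)) := by
      rw [← hlog8n]
      apply Real.log_le_log (by positivity)
      push_cast; linarith
    have hlogn : (0:ℝ) ≤ Real.log n := Real.log_natCast_nonneg n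
    simp only [Lb]
    linarith
  have hsum := sum_tail_ge one_le_one' hbq hn (8*n^3)
  have hup : Lb 1 (8*n^3+1) ^ (1-β) ≤ 3^(1-β) * Lb 1 n ^ (1-β) := by
    have h1 : Lb 1 (8*n^3+1) ^ (1-β) ≤ (3*Lb 1 n) ^ (1-β) :=
      Real.rpow_le_rpow_of_nonpos (by positivity) h3L (by linarith)
    rwa [Real.mul_rpow (by norm_num) hLn.le] at h1
  have key : (1 - 3^(1-β)) * Lb 1 n ^ (1-β)
      ≤ (β-1) * ∑ k ∈ Finset.Icc n (8*n^3), Lb 1 k ^ (-β)/k := by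
    nlinarith [hsum, hup]
  have hβ1 : (0:ℝ) < β - 1 := by linarith
  rw [div_mul_eq_mul_div, div_le_iff₀ hβ1]
  linarith [key]

lemma tail_ge {b q : ℝ} (hbq : 1 < b*q) {n : ℕ} (hn : 1 ≤ n) :
    ENNReal.ofReal ((1 - 3^(1-(b*q)))/(b*q-1) * Lb 1 n ^ (1-(b*q)))
      ≤ ∑' k : ℕ, if n ≤ k then lamSeq b q k else 0 := by
  have hn' : (0:ℝ) < n := by exact_mod_cast hn
  calc ENNReal.ofReal ((1 - 3^(1-(b*q)))/(b*q-1) * Lb 1 n ^ (1-(b*q)))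
      ≤ ENNReal.ofReal (∑ k ∈ Finset.Icc n (8*n^3), Lb 1 k ^ (-(b*q))/k) :=
        ENNReal.ofReal_le_ofReal (block_lower hbq hn)
    _ = ∑ k ∈ Finset.Icc n (8*n^3), ENNReal.ofReal (Lb 1 k ^ (-(b*q))/k) := by
        apply ENNReal.ofReal_sum_of_nonneg
        intro k hk
        have hk1 : 1 ≤ k := le_trans hn (Finset.mem_Icc.mp hk).1
        have hk' : (0:ℝ) < k := by exact_mod_cast hk1
        have := Lb_one_pos k
        positivity
    _ = ∑ k ∈ Finset.Icc n (8*n^3), (if n ≤ k then lamSeq b q k else 0) := by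
        apply Finset.sum_congr rfl
        intro k hk
        have hm := Finset.mem_Icc.mp hk
        rw [if_pos hm.1, lamSeq_eq (le_trans hn hm.1)]
    _ ≤ ∑' k : ℕ, (if n ≤ k then lamSeq b q k else 0) := ENNReal.sum_le_tsum _

lemma Gam_real_bound {d v : ℝ} (hd : 0 < d) (hv0 : 0 < v) (hv1 : v ≤ 1) :
    ∃ CΓ : ℝ, 0 < CΓ ∧ ∀ n : ℕ, 1 ≤ n →
      ∑ k ∈ Finset.Icc 1 n, (k:ℝ)^(v-1) * Lb 1 k ^ (-d)
        ≤ CΓ * ((n:ℝ)^v * Lb 1 n ^ (-d)) := by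
  obtain ⟨N₀, _, hN₀⟩ := exists_Lb_ge one_le_one' (2*d*2^(d+1)/v) 1
  have hk₀1 : 1 ≤ N₀ + 1 := by omega
  have hk₀ : ∀ m : ℕ, N₀ + 1 ≤ m → d * 2^(d+1) / Lb 1 m ≤ v/2 := by
    intro m hm
    have h1 : 2*d*2^(d+1)/v ≤ Lb 1 m := le_trans hN₀ (Lb_mono one_le_one' hm)
    have hLm := Lb_one_pos m
    have h2 : 2*d*2^(d+1) ≤ v * Lb 1 m := by
      rw [div_le_iff₀ hv0] at h1
      nlinarith [h1]
    rw [div_le_div_iff₀ hLm (by norm_num : (0:ℝ) < 2)]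
    nlinarith [h2]
  have hT5 := sum_gam_le one_le_one' hd hv0 hv1 hk₀1 hk₀
  set ε : ℝ := v/(2*d) with hε
  have hε0 : 0 < ε := by positivity
  have hεd : ε * d = v/2 := by rw [hε]; field_simp
  set c₂ : ℝ := (1+1/ε)^(-d) with hc₂
  have hc₂0 : 0 < c₂ := Real.rpow_pos_of_pos (by positivity) _
  have hlow : ∀ n : ℕ, 1 ≤ n → c₂ ≤ (n:ℝ)^v * Lb 1 n ^ (-d) := by
    intro n hn
    have hn' : (0:ℝ) < n := by exact_mod_cast hn
    have hn1 : (1:ℝ) ≤ n := by exact_mod_cast hn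
    have hLn := Lb_one_pos n
    have hnε : (1:ℝ) ≤ (n:ℝ)^ε := by
      rw [show (1:ℝ) = 1^ε from (Real.one_rpow ε).symm]
      exact Real.rpow_le_rpow (by norm_num) hn1 hε0.le
    have hA : Lb 1 n ≤ (1+1/ε) * (n:ℝ)^ε := by
      have hlog := Real.log_le_rpow_div (le_of_lt hn') hε0
      have he : (1+1/ε) * (n:ℝ)^ε = (n:ℝ)^ε + (n:ℝ)^ε/ε := by field_simp
      simp only [Lb]
      rw [he]
      linarith [hlog, hnε]
    have hB : ((1+1/ε) * (n:ℝ)^ε) ^ (-d) ≤ Lb 1 n ^ (-d) :=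
      Real.rpow_le_rpow_of_nonpos hLn hA (by linarith)
    have hC : ((1+1/ε) * (n:ℝ)^ε) ^ (-d) = c₂ * ((n:ℝ)^ε)^(-d) :=
      Real.mul_rpow (by positivity) (by positivity)
    have hD : ((n:ℝ)^ε)^(-d) = (n:ℝ)^(-(v/2)) := by
      rw [← Real.rpow_mul hn'.le]
      congr 1
      rw [show ε * (-d) = -(ε*d) by ring, hεd]
    have hE : c₂ * (n:ℝ)^(-(v/2)) ≤ Lb 1 n ^ (-d) := by
      rw [← hD, ← hC]; exact hB
    have hsplit : (n:ℝ)^v = (n:ℝ)^(v/2) * (n:ℝ)^(v/2) := by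
      rw [← Real.rpow_add hn']; norm_num
    have hninv : (n:ℝ)^(v/2) * (n:ℝ)^(-(v/2)) = 1 := by
      rw [← Real.rpow_add hn']; norm_num
    have hnv2 : (1:ℝ) ≤ (n:ℝ)^(v/2) := by
      rw [show (1:ℝ) = 1^(v/2) from (Real.one_rpow _).symm]
      exact Real.rpow_le_rpow (by norm_num) hn1 (by positivity)
    have hY0 : 0 ≤ c₂ * (n:ℝ)^(-(v/2)) := mul_nonneg hc₂0.le (Real.rpow_nonneg hn'.le _)
    have hX0 : 0 ≤ (n:ℝ)^(v/2) := Real.rpow_nonneg hn'.le _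
    calc c₂ = (n:ℝ)^(v/2) * (c₂ * (n:ℝ)^(-(v/2))) := by
          rw [show (n:ℝ)^(v/2) * (c₂ * (n:ℝ)^(-(v/2)))
              = ((n:ℝ)^(v/2) * (n:ℝ)^(-(v/2))) * c₂ from by ring, hninv, one_mul]
      _ ≤ ((n:ℝ)^(v/2) * (n:ℝ)^(v/2)) * (c₂ * (n:ℝ)^(-(v/2))) := by
          apply mul_le_mul_of_nonneg_right _ hY0
          exact le_mul_of_one_le_left hX0 hnv2
      _ ≤ ((n:ℝ)^(v/2) * (n:ℝ)^(v/2)) * Lb 1 n ^ (-d) :=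
          mul_le_mul_of_nonneg_left hE (by positivity)
      _ = (n:ℝ)^v * Lb 1 n ^ (-d) := by rw [hsplit]
  set C0 : ℝ := ∑ k ∈ Finset.Icc 1 (N₀+1), (k:ℝ)^(v-1) * Lb 1 k ^ (-d) with hC0def
  have hC0 : 0 ≤ C0 := by
    apply Finset.sum_nonneg
    intro i _
    have := Lb_one_pos i
    positivity
  refine ⟨C0/c₂ + 2/v, by positivity, ?_⟩
  intro n hn
  have h1 := hT5 n
  have h2 := hlow n hn
  have hX : 0 ≤ (n:ℝ)^v * Lb 1 n ^ (-d) := by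
    have := Lb_one_pos n
    positivity
  have h3 : C0 ≤ (C0/c₂) * ((n:ℝ)^v * Lb 1 n ^ (-d)) := by
    rw [div_mul_eq_mul_div, le_div_iff₀ hc₂0]
    nlinarith [h2, hC0]
  calc ∑ k ∈ Finset.Icc 1 n, (k:ℝ)^(v-1) * Lb 1 k ^ (-d)
      ≤ C0 + (2/v) * (n:ℝ)^v * Lb 1 n ^ (-d) := h1
    _ ≤ (C0/c₂) * ((n:ℝ)^v * Lb 1 n ^ (-d)) + (2/v) * (n:ℝ)^v * Lb 1 n ^ (-d) := by
        linarith [h3]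
    _ = (C0/c₂ + 2/v) * ((n:ℝ)^v * Lb 1 n ^ (-d)) := by ring

lemma nLs_mono {B s : ℝ} (hB1 : 1 ≤ B) (hBs : -s ≤ B) {m n : ℕ} (hm : 1 ≤ m) (hmn : m ≤ n) :
    (m:ℝ) * Lb B m ^ s ≤ (n:ℝ) * Lb B n ^ s := by
  have hm' : (0:ℝ) < m := by exact_mod_cast hm
  have hn' : (0:ℝ) < n := by exact_mod_cast (le_trans hm hmn)
  have hmn' : (m:ℝ) ≤ n := by exact_mod_cast hmn
  have hLm := Lb_pos hB1 m
  have hLn := Lb_pos hB1 n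
  have hB0 : (0:ℝ) < B := by linarith
  rcases le_or_gt 0 s with hs | hs
  · have h1 : Lb B m ^ s ≤ Lb B n ^ s :=
      Real.rpow_le_rpow hLm.le (Lb_mono hB1 hmn) hs
    have h2 : 0 ≤ Lb B m ^ s := Real.rpow_nonneg hLm.le _
    nlinarith
  · -- key : m * Lb B n ^ (-s) ≤ n * Lb B m ^ (-s)
    have hz : 0 ≤ Real.log n - Real.log m := by
      have := Real.log_le_log hm' hmn'
      linarith
    set z : ℝ := Real.log n - Real.log m with hzdef
    have hLnm : Lb B n = Lb B m + z := by simp only [Lb]; rw [hzdef]; ring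
    have h1 : Lb B n ≤ Lb B m * Real.exp (z/B) := by
      have he : z/B + 1 ≤ Real.exp (z/B) := Real.add_one_le_exp _
      have hLB : B ≤ Lb B m := by
        have := Real.log_natCast_nonneg m
        simp only [Lb]; linarith
      have h2 : z ≤ Lb B m * (z/B) := by
        have hzB : 0 ≤ z/B := by positivity
        have hh := mul_le_mul_of_nonneg_right hLB hzB
        rw [show B * (z/B) = z from by field_simp] at hh
        exact hh
      calc Lb B n = Lb B m + z := hLnm
        _ ≤ Lb B m + Lb B m * (z/B) := by linarith
        _ = Lb B m * (1 + z/B) := by ring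
        _ ≤ Lb B m * Real.exp (z/B) := mul_le_mul_of_nonneg_left (by linarith) hLm.le
    have h2 : Lb B n ^ (-s) ≤ (Lb B m * Real.exp (z/B)) ^ (-s) :=
      Real.rpow_le_rpow hLn.le h1 (by linarith)
    have h3 : (Lb B m * Real.exp (z/B)) ^ (-s)
        = Lb B m ^ (-s) * Real.exp (z/B) ^ (-s) :=
      Real.mul_rpow hLm.le (Real.exp_pos _).le
    have h4 : Real.exp (z/B) ^ (-s) = Real.exp (z/B * (-s)) := by
      rw [Real.rpow_def_of_pos (Real.exp_pos _), Real.log_exp]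
    have h5 : z/B * (-s) ≤ z := by
      have hzB : 0 ≤ z/B := by positivity
      have : z/B * (-s) ≤ z/B * B := mul_le_mul_of_nonneg_left hBs hzB
      rw [div_mul_cancel₀ z (ne_of_gt hB0)] at this
      exact this
    have h6 : Real.exp (z/B * (-s)) ≤ (n:ℝ)/m := by
      calc Real.exp (z/B * (-s)) ≤ Real.exp z := Real.exp_le_exp.mpr h5
        _ = (n:ℝ)/m := by
            rw [hzdef, Real.exp_sub, Real.exp_log hn', Real.exp_log hm']
    have hkey : (m:ℝ) * Lb B n ^ (-s) ≤ n * Lb B m ^ (-s) := by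
      have hLms : 0 ≤ Lb B m ^ (-s) := Real.rpow_nonneg hLm.le _
      calc (m:ℝ) * Lb B n ^ (-s) ≤ m * (Lb B m ^ (-s) * ((n:ℝ)/m)) := by
            apply mul_le_mul_of_nonneg_left _ hm'.le
            rw [h3, h4] at h2
            calc Lb B n ^ (-s) ≤ Lb B m ^ (-s) * Real.exp (z/B * (-s)) := h2
              _ ≤ Lb B m ^ (-s) * ((n:ℝ)/m) := mul_le_mul_of_nonneg_left h6 hLms
        _ = n * Lb B m ^ (-s) := by field_simp
    -- convert
    have em : Lb B m ^ s = (Lb B m ^ (-s))⁻¹ := by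
      nth_rewrite 1 [← neg_neg s]
      rw [Real.rpow_neg hLm.le]
    have en : Lb B n ^ s = (Lb B n ^ (-s))⁻¹ := by
      nth_rewrite 1 [← neg_neg s]
      rw [Real.rpow_neg hLn.le]
    rw [em, en]
    have hpm : 0 < Lb B m ^ (-s) := Real.rpow_pos_of_pos hLm _
    have hpn : 0 < Lb B n ^ (-s) := Real.rpow_pos_of_pos hLn _
    rw [show (m:ℝ) * (Lb B m ^ (-s))⁻¹ = m / (Lb B m ^ (-s)) from by ring,
      show (n:ℝ) * (Lb B n ^ (-s))⁻¹ = n / (Lb B n ^ (-s)) from by ring,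
      div_le_div_iff₀ hpm hpn]
    nlinarith [hkey]

end BGEaux

set_option maxHeartbeats 1600000 in
/-- with `λ_n = (1+log n)^{−bq}n^{−1}`, `γ_n = (1+log n)^{(−b+1/q)r}n^{r/p−1}`,
`q < r < p`, `b > 1/q`, `u = q/p`, `v = r/p`, `1/w = 1/u − 1/v`, the second
Bennett–Grosse-Erdmann condition
`∑_n λ_n (∑_{k≥n} λ_k)^{w/v} max_{k≤n}(k^v/Γ_k)^{w/v}` diverges; consequently the
Hardy-type inequality `(∑ λ_n(∑_{k≤n} a_k)^u)^{1/u} ≲ (∑ γ_n a_n^v)^{1/v}` fails for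
some non-negative non-increasing sequence `(a_n)`. -/
theorem BGE_condition_diverges (p q r b : ℝ)
    (hq : 0 < q) (hqr : q < r) (hrp : r < p) (hb : 1/q < b) :
    (∑' n : ℕ, if 1 ≤ n then
        lamSeq b q n *
          ((∑' k : ℕ, if n ≤ k then lamSeq b q k else 0) ^
            (((q*r)/(p*(r-q))) / (r/p))) *
          ((⨆ k ∈ Finset.Icc 1 n, ((k:ℝ≥0∞)) ^ (r/p) / GamSum b q r p k) ^
            (((q*r)/(p*(r-q))) / (r/p)))
      else 0) = ⊤ ∧
    ∀ C : ℝ≥0∞, C ≠ ⊤ → ∃ a : ℕ → ℝ≥0∞,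
      (∀ m n : ℕ, 1 ≤ m → m ≤ n → a n ≤ a m) ∧
      ¬ ((∑' n : ℕ, if 1 ≤ n then
            lamSeq b q n * (∑ k ∈ Finset.Icc 1 n, a k) ^ (q/p) else 0) ^ (p/q)
          ≤ C * (∑' n : ℕ, if 1 ≤ n then
            gamSeq b q r p n * (a n) ^ (r/p) else 0) ^ (p/r)) := by
  have hr : 0 < r := lt_trans hq hqr
  have hp : 0 < p := lt_trans hr hrp
  have hbq : 1 < b*q := by rw [div_lt_iff₀ hq] at hb; linarith
  have hb' : 0 < b - 1/q := by linarith
  have hd : 0 < (b-1/q)*r := by positivity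
  have hv0 : 0 < r/p := by positivity
  have hv1 : r/p ≤ 1 := by rw [div_le_one hp]; linarith
  have hrq : 0 < r - q := by linarith
  have hq0 : q ≠ 0 := ne_of_gt hq
  have hrq0 : r - q ≠ 0 := ne_of_gt hrq
  constructor
  · -- Part 1: divergence of the BGE condition
    obtain ⟨CΓ, hCΓ0, hCΓ⟩ := BGEaux.Gam_real_bound hd hv0 hv1
    have h31 : (3:ℝ)^(1-(b*q)) < 1 :=
      Real.rpow_lt_one_of_one_lt_of_neg (by norm_num) (by linarith)
    set ct : ℝ := (1 - 3^(1-(b*q)))/(b*q-1) with hctdef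
    have hct0 : 0 < ct := by rw [hctdef]; exact div_pos (by linarith) (by linarith)
    set E : ℝ := ((q*r)/(p*(r-q))) / (r/p) with hEdef
    have hE : E = q/(r-q) := by rw [hEdef]; field_simp
    have hE0 : (0:ℝ) ≤ E := by rw [hE]; positivity
    have hctE := Real.rpow_pos_of_pos hct0 E
    have hCΓE := Real.rpow_pos_of_pos hCΓ0 E
    have hcc0 : 0 < ct^E / CΓ^E := by positivity
    apply BGEaux.tsum_top hcc0 (le_refl 1)
    intro n hn
    rw [if_pos hn]
    have hLn := BGEaux.Lb_one_pos n
    have hn' : (0:ℝ) < n := by exact_mod_cast hn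
    have hTail := BGEaux.tail_ge hbq hn
    rw [← hctdef] at hTail
    have hSup : ENNReal.ofReal (BGEaux.Lb 1 n ^ ((b-1/q)*r) / CΓ)
        ≤ ⨆ k ∈ Finset.Icc 1 n, ((k:ℝ≥0∞)) ^ (r/p) / GamSum b q r p k := by
      have hmem : n ∈ Finset.Icc 1 n := Finset.mem_Icc.mpr ⟨hn, le_refl n⟩
      refine le_trans ?_
        (le_biSup (fun k : ℕ => ((k:ℝ≥0∞)) ^ (r/p) / GamSum b q r p k) hmem)
      have hGam : GamSum b q r p n
          ≤ ENNReal.ofReal (CΓ * ((n:ℝ)^(r/p) * BGEaux.Lb 1 n ^ (-((b-1/q)*r)))) := by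
        rw [BGEaux.GamSum_eq]
        exact ENNReal.ofReal_le_ofReal (hCΓ n hn)
      have hnum : ((n:ℝ≥0∞)) ^ (r/p) = ENNReal.ofReal ((n:ℝ)^(r/p)) := by
        rw [show ((n:ℝ≥0∞)) = ENNReal.ofReal (n:ℝ) from (ENNReal.ofReal_natCast n).symm,
          ENNReal.ofReal_rpow_of_pos hn']
      have hLd := Real.rpow_pos_of_pos hLn (-((b-1/q)*r))
      have hnv := Real.rpow_pos_of_pos hn' (r/p)
      have hdenpos : 0 < CΓ * ((n:ℝ)^(r/p) * BGEaux.Lb 1 n ^ (-((b-1/q)*r))) := by positivity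
      calc ENNReal.ofReal (BGEaux.Lb 1 n ^ ((b-1/q)*r) / CΓ)
          = ENNReal.ofReal ((n:ℝ)^(r/p)
              / (CΓ * ((n:ℝ)^(r/p) * BGEaux.Lb 1 n ^ (-((b-1/q)*r))))) := by
            congr 1
            rw [Real.rpow_neg hLn.le]
            have hLd' := Real.rpow_pos_of_pos hLn ((b-1/q)*r)
            field_simp
        _ = ENNReal.ofReal ((n:ℝ)^(r/p))
              / ENNReal.ofReal (CΓ * ((n:ℝ)^(r/p) * BGEaux.Lb 1 n ^ (-((b-1/q)*r)))) :=
            ENNReal.ofReal_div_of_pos hdenpos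
        _ ≤ ((n:ℝ≥0∞)) ^ (r/p) / GamSum b q r p n := by
            rw [hnum]
            exact ENNReal.div_le_div_left hGam _
    have hlam : lamSeq b q n = ENNReal.ofReal (BGEaux.Lb 1 n ^ (-(b*q)) / n) :=
      BGEaux.lamSeq_eq hn
    have harg2 : 0 < ct * BGEaux.Lb 1 n ^ (1-(b*q)) := by
      have := Real.rpow_pos_of_pos hLn (1-(b*q)); positivity
    have harg3 : 0 < BGEaux.Lb 1 n ^ ((b-1/q)*r) / CΓ := by
      have := Real.rpow_pos_of_pos hLn ((b-1/q)*r); positivity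
    have hf2 : ENNReal.ofReal ((ct * BGEaux.Lb 1 n ^ (1-(b*q)))^E)
        ≤ (∑' k : ℕ, if n ≤ k then lamSeq b q k else 0) ^ E := by
      rw [← ENNReal.ofReal_rpow_of_pos harg2]
      exact ENNReal.rpow_le_rpow hTail hE0
    have hf3 : ENNReal.ofReal ((BGEaux.Lb 1 n ^ ((b-1/q)*r) / CΓ)^E)
        ≤ (⨆ k ∈ Finset.Icc 1 n, ((k:ℝ≥0∞)) ^ (r/p) / GamSum b q r p k) ^ E := by
      rw [← ENNReal.ofReal_rpow_of_pos harg3]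
      exact ENNReal.rpow_le_rpow hSup hE0
    have hexp : -(b*q) + (1-(b*q))*E + ((b-1/q)*r)*E = -1 := by
      rw [hE]; field_simp; ring
    have hreal : BGEaux.Lb 1 n ^ (-(b*q)) / n * (ct * BGEaux.Lb 1 n ^ (1-(b*q)))^E
        * (BGEaux.Lb 1 n ^ ((b-1/q)*r) / CΓ)^E
        = (ct^E/CΓ^E) / (n * BGEaux.Lb 1 n) := by
      rw [Real.mul_rpow hct0.le (Real.rpow_nonneg hLn.le _),
        Real.div_rpow (Real.rpow_nonneg hLn.le _) hCΓ0.le,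
        ← Real.rpow_mul hLn.le, ← Real.rpow_mul hLn.le]
      have hcomb : BGEaux.Lb 1 n ^ (-(b*q)) * BGEaux.Lb 1 n ^ ((1-(b*q))*E)
          * BGEaux.Lb 1 n ^ (((b-1/q)*r)*E) = BGEaux.Lb 1 n ^ (-1:ℝ) := by
        rw [← Real.rpow_add hLn, ← Real.rpow_add hLn, hexp]
      calc BGEaux.Lb 1 n ^ (-(b*q)) / n * (ct^E * BGEaux.Lb 1 n ^ ((1-(b*q))*E))
            * (BGEaux.Lb 1 n ^ (((b-1/q)*r)*E) / CΓ^E)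
          = (BGEaux.Lb 1 n ^ (-(b*q)) * BGEaux.Lb 1 n ^ ((1-(b*q))*E)
              * BGEaux.Lb 1 n ^ (((b-1/q)*r)*E)) * ct^E / (CΓ^E * n) := by ring
        _ = BGEaux.Lb 1 n ^ (-1:ℝ) * ct^E / (CΓ^E * n) := by rw [hcomb]
        _ = (ct^E/CΓ^E) / (n * BGEaux.Lb 1 n) := by
            rw [Real.rpow_neg_one]
            field_simp
    calc ENNReal.ofReal (ct^E/CΓ^E / (n * BGEaux.Lb 1 n))
        = ENNReal.ofReal (BGEaux.Lb 1 n ^ (-(b*q)) / n)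
            * ENNReal.ofReal ((ct * BGEaux.Lb 1 n ^ (1-(b*q)))^E)
            * ENNReal.ofReal ((BGEaux.Lb 1 n ^ ((b-1/q)*r) / CΓ)^E) := by
          rw [← ENNReal.ofReal_mul (by positivity), ← ENNReal.ofReal_mul (by positivity),
            hreal]
      _ ≤ lamSeq b q n * ((∑' k : ℕ, if n ≤ k then lamSeq b q k else 0) ^ E)
            * ((⨆ k ∈ Finset.Icc 1 n, ((k:ℝ≥0∞)) ^ (r/p) / GamSum b q r p k) ^ E) :=
          mul_le_mul' (mul_le_mul' (le_of_eq hlam.symm) hf2) hf3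
  · -- Part 2: failure of the Hardy-type inequality
    intro C hC
    obtain ⟨CΓ, hCΓ0, hCΓ⟩ := BGEaux.Gam_real_bound hd hv0 hv1
    have h31 : (3:ℝ)^(1-(b*q)) < 1 :=
      Real.rpow_lt_one_of_one_lt_of_neg (by norm_num) (by linarith)
    have hct0 : 0 < (1 - 3^(1-(b*q)))/(b*q-1) := div_pos (by linarith) (by linarith)
    set ct : ℝ := (1 - 3^(1-(b*q)))/(b*q-1) with hctdef
    set cstar : ℝ := ct * 2^(1-(b*q)) with hcstardef
    have hcstar0 : 0 < cstar := by
      have : (0:ℝ) < 2^(1-(b*q)) := Real.rpow_pos_of_pos (by norm_num) _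
      rw [hcstardef]; positivity
    -- exponent gap
    have hδ0 : 0 < p/q - p/r := by
      have : p/r < p/q := div_lt_div_of_pos_left hp hq hqr
      linarith
    -- choose J
    set R : ℝ := C.toReal * CΓ^(p/r) / cstar^(p/q) with hRdef
    have hR0 : 0 ≤ R := by
      have h1 : 0 ≤ C.toReal := ENNReal.toReal_nonneg
      have h2 : 0 ≤ CΓ^(p/r) := Real.rpow_nonneg hCΓ0.le _
      have h3 : 0 < cstar^(p/q) := Real.rpow_pos_of_pos hcstar0 _
      rw [hRdef]; positivity
    set J : ℕ := ⌈(max R 1)^(1/(p/q - p/r))⌉₊ + 1 with hJdef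
    have hJ1 : 1 ≤ J := by omega
    have hJ0 : (0:ℝ) < J := by
      have : (0:ℕ) < J := hJ1
      exact_mod_cast this
    have hJR : R < (J:ℝ)^(p/q - p/r) := by
      have hmax0 : (0:ℝ) ≤ max R 1 := le_trans zero_le_one (le_max_right _ _)
      have h1 : (max R 1)^(1/(p/q - p/r)) < (J:ℝ) := by
        have := Nat.le_ceil ((max R 1)^(1/(p/q - p/r)))
        have h2 : (⌈(max R 1)^(1/(p/q - p/r))⌉₊ : ℝ) < J := by
          rw [hJdef]; push_cast; linarith
        linarith
      have h3 : ((max R 1)^(1/(p/q - p/r)))^(p/q - p/r) < (J:ℝ)^(p/q - p/r) :=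
        Real.rpow_lt_rpow (Real.rpow_nonneg hmax0 _) h1 hδ0
      rw [← Real.rpow_mul hmax0, one_div, inv_mul_cancel₀ (ne_of_gt hδ0), Real.rpow_one] at h3
      exact lt_of_le_of_lt (le_max_left R 1) h3
    -- the scales
    set m : ℕ → ℕ := fun j => 65 ^ (4 ^ j) with hmdef
    have hm65 : ∀ j, 65 ≤ m j := by
      intro j
      calc 65 = 65^1 := (pow_one 65).symm
        _ ≤ 65 ^ (4 ^ j) := Nat.pow_le_pow_right (by norm_num) (Nat.one_le_pow _ _ (by norm_num))
    have hm1 : ∀ j, 1 ≤ m j := fun j => le_trans (by norm_num) (hm65 j)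
    have hm0' : ∀ j, (0:ℝ) < m j := by
      intro j; exact_mod_cast hm1 j
    have hm4 : ∀ j, m (j+1) = (m j)^4 := by
      intro j
      rw [hmdef]
      simp only []
      rw [pow_succ, pow_mul]
    have hmmono : Monotone m := by
      intro i j hij
      exact Nat.pow_le_pow_right (by norm_num) (Nat.pow_le_pow_right (by norm_num) hij)
    have hblock : ∀ j, 8*(m j + 1)^3 < m (j+1) := by
      intro j
      rw [hm4 j]
      have h65 := hm65 j
      have hxx : m j + 1 ≤ 2 * m j := by omega
      have h3 : (m j + 1)^3 ≤ (2 * m j)^3 := Nat.pow_le_pow_left hxx 3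
      have h4 : (2 * m j)^3 = 8 * (m j)^3 := by ring
      have h5 : 8 * (m j + 1)^3 ≤ 64 * (m j)^3 := by
        calc 8 * (m j + 1)^3 ≤ 8 * ((2 * m j)^3) := Nat.mul_le_mul_left 8 h3
          _ = 64 * (m j)^3 := by rw [h4]; ring
      have h6 : 64 * (m j)^3 < 65 * (m j)^3 := by
        have : 0 < (m j)^3 := Nat.pow_pos (hm1 j)
        omega
      have h7 : 65 * (m j)^3 ≤ m j * (m j)^3 := Nat.mul_le_mul_right _ h65
      calc 8 * (m j + 1)^3 ≤ 64 * (m j)^3 := h5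
        _ < 65 * (m j)^3 := h6
        _ ≤ m j * (m j)^3 := h7
        _ = (m j)^4 := by ring
    have hdisj12 : ∀ i j, i < j → 8*(m i + 1)^3 < m j + 1 := by
      intro i j hij
      have h1 := hblock i
      have h2 : m (i+1) ≤ m j := hmmono hij
      omega
    -- the levels
    set κ : ℝ := p*(b-1/q) with hκdef
    set c : ℕ → ℝ := fun j => BGEaux.Lb 1 (m j) ^ κ / (m j) with hcdef
    have hc0 : ∀ j, 0 < c j := by
      intro j
      have := Real.rpow_pos_of_pos (BGEaux.Lb_one_pos (m j)) κ
      have := hm0' j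
      rw [hcdef]
      positivity
    -- the sequence
    refine ⟨fun k => (Finset.Icc 1 J).sup (fun j => if k ≤ m j then ENNReal.ofReal (c j) else 0),
      ?_, ?_⟩
    · intro mm nn _hmm hmn
      simp only []
      apply Finset.sup_le
      intro j hj
      by_cases h : nn ≤ m j
      · rw [if_pos h]
        have h2 : (if mm ≤ m j then ENNReal.ofReal (c j) else 0) = ENNReal.ofReal (c j) :=
          if_pos (le_trans hmn h)
        rw [← h2]
        exact Finset.le_sup (f := fun j => if mm ≤ m j then ENNReal.ofReal (c j) else 0) hj
      · rw [if_neg h]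
        exact zero_le
    · intro hcontra
      dsimp only [] at hcontra
      have hu0 : (0:ℝ) ≤ q/p := by positivity
      -- partial sums lower bound
      have hA : ∀ j, j ∈ Finset.Icc 1 J → ∀ n : ℕ, m j ≤ n →
          ENNReal.ofReal (BGEaux.Lb 1 (m j) ^ κ)
            ≤ ∑ k ∈ Finset.Icc 1 n, (Finset.Icc 1 J).sup
                (fun i => if k ≤ m i then ENNReal.ofReal (c i) else 0) := by
        intro j hj n hn
        have h1 : ∑ k ∈ Finset.Icc 1 n, (if k ≤ m j then ENNReal.ofReal (c j) else 0)
            ≤ ∑ k ∈ Finset.Icc 1 n, (Finset.Icc 1 J).sup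
                (fun i => if k ≤ m i then ENNReal.ofReal (c i) else 0) := by
          apply Finset.sum_le_sum
          intro k _
          exact Finset.le_sup (f := fun i => if k ≤ m i then ENNReal.ofReal (c i) else 0) hj
        refine le_trans ?_ h1
        have h2 : ∑ k ∈ Finset.Icc 1 (m j), (if k ≤ m j then ENNReal.ofReal (c j) else 0)
            = ∑ k ∈ Finset.Icc 1 n, (if k ≤ m j then ENNReal.ofReal (c j) else 0) := by
          apply Finset.sum_subset (Finset.Icc_subset_Icc_right hn)
          intro x hx hnx
          rw [Finset.mem_Icc] at hx hnx
          rw [if_neg (by omega)]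
        rw [← h2]
        have h3 : ∑ k ∈ Finset.Icc 1 (m j), (if k ≤ m j then ENNReal.ofReal (c j) else 0)
            = (m j) * ENNReal.ofReal (c j) := by
          rw [Finset.sum_congr rfl (fun k hk => if_pos (Finset.mem_Icc.mp hk).2),
            Finset.sum_const, Nat.card_Icc]
          simp [nsmul_eq_mul]
        rw [h3, show ((m j : ℕ):ℝ≥0∞) = ENNReal.ofReal (m j) from (ENNReal.ofReal_natCast _).symm,
          ← ENNReal.ofReal_mul (by positivity)]
        apply ENNReal.ofReal_le_ofReal
        rw [hcdef]
        rw [mul_div_cancel₀ _ (ne_of_gt (hm0' j))]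
      -- LHS lower bound
      have hLHSlow : ENNReal.ofReal ((J:ℝ) * cstar)
          ≤ (∑' n : ℕ, if 1 ≤ n then
              lamSeq b q n * (∑ k ∈ Finset.Icc 1 n, (Finset.Icc 1 J).sup
                (fun i => if k ≤ m i then ENNReal.ofReal (c i) else 0)) ^ (q/p) else 0) := by
        set f : ℕ → ℝ≥0∞ := fun n => if 1 ≤ n then
              lamSeq b q n * (∑ k ∈ Finset.Icc 1 n, (Finset.Icc 1 J).sup
                (fun i => if k ≤ m i then ENNReal.ofReal (c i) else 0)) ^ (q/p) else 0 with hfdef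
        have hdisjoint : (Finset.Icc 1 J : Set ℕ).PairwiseDisjoint
            (fun j => Finset.Icc (m j + 1) (8*(m j + 1)^3)) := by
          intro i hi j hj hij
          have key : ∀ i' j' : ℕ, i' < j' →
              Disjoint (Finset.Icc (m i' + 1) (8*(m i' + 1)^3))
                (Finset.Icc (m j' + 1) (8*(m j' + 1)^3)) := by
            intro i' j' hlt
            apply Finset.disjoint_left.mpr
            intro x hx1 hx2
            rw [Finset.mem_Icc] at hx1 hx2
            have := hdisj12 i' j' hlt
            omega
          rcases lt_or_gt_of_ne hij with h | h
          · exact key i j h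
          · exact (key j i h).symm
        have hsub := ENNReal.sum_le_tsum
          (f := f) ((Finset.Icc 1 J).biUnion (fun j => Finset.Icc (m j + 1) (8*(m j + 1)^3)))
        rw [Finset.sum_biUnion hdisjoint] at hsub
        refine le_trans ?_ hsub
        have hper : ∀ j, j ∈ Finset.Icc 1 J →
            ENNReal.ofReal cstar ≤ ∑ n ∈ Finset.Icc (m j + 1) (8*(m j + 1)^3), f n := by
          intro j hj
          have hmj1 : 1 ≤ m j + 1 := by omega
          have hLmj := BGEaux.Lb_one_pos (m j)
          have hLmj1 := BGEaux.Lb_one_pos (m j + 1)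
          have hLκu : (0:ℝ) < BGEaux.Lb 1 (m j) ^ (κ*(q/p)) :=
            Real.rpow_pos_of_pos hLmj _
          have hstep1 : ∀ n, n ∈ Finset.Icc (m j + 1) (8*(m j + 1)^3) →
              ENNReal.ofReal (BGEaux.Lb 1 n ^ (-(b*q)) / n * BGEaux.Lb 1 (m j) ^ (κ*(q/p)))
                ≤ f n := by
            intro n hn
            rw [Finset.mem_Icc] at hn
            have hn1 : 1 ≤ n := by omega
            have hn' : (0:ℝ) < n := by exact_mod_cast hn1
            rw [hfdef]
            simp only []
            rw [if_pos hn1]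
            have hAn : ENNReal.ofReal (BGEaux.Lb 1 (m j) ^ κ)
                ≤ ∑ k ∈ Finset.Icc 1 n, (Finset.Icc 1 J).sup
                  (fun i => if k ≤ m i then ENNReal.ofReal (c i) else 0) :=
              hA j hj n (by omega)
            have hApow : ENNReal.ofReal (BGEaux.Lb 1 (m j) ^ (κ*(q/p)))
                ≤ (∑ k ∈ Finset.Icc 1 n, (Finset.Icc 1 J).sup
                  (fun i => if k ≤ m i then ENNReal.ofReal (c i) else 0)) ^ (q/p) := by
              rw [Real.rpow_mul hLmj.le, ← ENNReal.ofReal_rpow_of_pos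
                (Real.rpow_pos_of_pos hLmj _)]
              exact ENNReal.rpow_le_rpow hAn hu0
            rw [BGEaux.lamSeq_eq hn1, ENNReal.ofReal_mul
              (div_nonneg (Real.rpow_nonneg (BGEaux.Lb_one_pos n).le _) hn'.le)]
            exact mul_le_mul' (le_refl _) hApow
          calc ENNReal.ofReal cstar
              ≤ ENNReal.ofReal (∑ n ∈ Finset.Icc (m j + 1) (8*(m j + 1)^3),
                  BGEaux.Lb 1 n ^ (-(b*q)) / n * BGEaux.Lb 1 (m j) ^ (κ*(q/p))) := by
                apply ENNReal.ofReal_le_ofReal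
                rw [← Finset.sum_mul]
                have hbl := BGEaux.block_lower hbq hmj1
                have h2L : BGEaux.Lb 1 (m j + 1) ^ (1-(b*q))
                    ≥ 2^(1-(b*q)) * BGEaux.Lb 1 (m j) ^ (1-(b*q)) := by
                  have h1 : BGEaux.Lb 1 (m j + 1) ≤ 2 * BGEaux.Lb 1 (m j) :=
                    BGEaux.Lb_le_two_mul BGEaux.one_le_one' (m j)
                  have h2 := Real.rpow_le_rpow_of_nonpos hLmj1 h1 (by linarith : 1-(b*q) ≤ 0)
                  rw [ge_iff_le, ← Real.mul_rpow (by norm_num : (0:ℝ) ≤ 2) hLmj.le]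
                  exact h2
                have hexp0 : BGEaux.Lb 1 (m j) ^ (1-(b*q)) * BGEaux.Lb 1 (m j) ^ (κ*(q/p)) = 1 := by
                  rw [← Real.rpow_add hLmj]
                  rw [show 1-(b*q) + κ*(q/p) = 0 from by rw [hκdef]; field_simp; ring]
                  exact Real.rpow_zero _
                have hsum_ge : ct * BGEaux.Lb 1 (m j + 1) ^ (1-(b*q))
                    ≤ ∑ k ∈ Finset.Icc (m j + 1) (8*(m j + 1)^3), BGEaux.Lb 1 k ^ (-(b*q))/k := hbl
                calc cstar = ct * (2^(1-(b*q)) * BGEaux.Lb 1 (m j) ^ (1-(b*q)))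
                      * BGEaux.Lb 1 (m j) ^ (κ*(q/p)) := by
                      rw [hcstardef]
                      linear_combination (-(ct * 2^(1-(b*q)))) * hexp0
                  _ ≤ ct * BGEaux.Lb 1 (m j + 1) ^ (1-(b*q)) * BGEaux.Lb 1 (m j) ^ (κ*(q/p)) := by
                      apply mul_le_mul_of_nonneg_right _ hLκu.le
                      exact mul_le_mul_of_nonneg_left h2L hct0.le
                  _ ≤ (∑ k ∈ Finset.Icc (m j + 1) (8*(m j + 1)^3),
                        BGEaux.Lb 1 k ^ (-(b*q))/k) * BGEaux.Lb 1 (m j) ^ (κ*(q/p)) :=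
                      mul_le_mul_of_nonneg_right hsum_ge hLκu.le
            _ = ∑ n ∈ Finset.Icc (m j + 1) (8*(m j + 1)^3),
                  ENNReal.ofReal (BGEaux.Lb 1 n ^ (-(b*q)) / n * BGEaux.Lb 1 (m j) ^ (κ*(q/p))) := by
                apply ENNReal.ofReal_sum_of_nonneg
                intro k hk
                rw [Finset.mem_Icc] at hk
                have hk' : (0:ℝ) < k := by
                  have : 1 ≤ k := by omega
                  exact_mod_cast this
                have := BGEaux.Lb_one_pos k
                positivity
            _ ≤ ∑ n ∈ Finset.Icc (m j + 1) (8*(m j + 1)^3), f n :=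
                Finset.sum_le_sum hstep1
        calc ENNReal.ofReal ((J:ℝ) * cstar)
            = ∑ _j ∈ Finset.Icc 1 J, ENNReal.ofReal cstar := by
              rw [Finset.sum_const, Nat.card_Icc]
              simp only [Nat.add_sub_cancel, nsmul_eq_mul]
              rw [show ((J:ℕ):ℝ≥0∞) = ENNReal.ofReal (J:ℝ) from (ENNReal.ofReal_natCast _).symm,
                ← ENNReal.ofReal_mul (by positivity)]
          _ ≤ ∑ j ∈ Finset.Icc 1 J, ∑ n ∈ Finset.Icc (m j + 1) (8*(m j + 1)^3), f n :=
              Finset.sum_le_sum hper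
      -- RHS upper bound
      have hRHSup : (∑' n : ℕ, if 1 ≤ n then
            gamSeq b q r p n * ((Finset.Icc 1 J).sup
              (fun i => if n ≤ m i then ENNReal.ofReal (c i) else 0)) ^ (r/p) else 0)
          ≤ ENNReal.ofReal ((J:ℝ) * CΓ) := by
        have hgb : ∀ n : ℕ, (if 1 ≤ n then
            gamSeq b q r p n * ((Finset.Icc 1 J).sup
              (fun i => if n ≤ m i then ENNReal.ofReal (c i) else 0)) ^ (r/p) else 0)
            ≤ ∑ j ∈ Finset.Icc 1 J, (if n ∈ Finset.Icc 1 (m j) then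
                gamSeq b q r p n * ENNReal.ofReal (c j ^ (r/p)) else 0) := by
          intro n
          by_cases hn1 : 1 ≤ n
          · rw [if_pos hn1]
            obtain ⟨j0, hj0mem, hj0⟩ := Finset.exists_mem_eq_sup (Finset.Icc 1 J)
              (Finset.nonempty_Icc.mpr hJ1)
              (fun i => if n ≤ m i then ENNReal.ofReal (c i) else 0)
            rw [hj0]
            by_cases hcase : n ≤ m j0
            · rw [if_pos hcase]
              have hterm : gamSeq b q r p n * (ENNReal.ofReal (c j0)) ^ (r/p)
                  = (if n ∈ Finset.Icc 1 (m j0) then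
                      gamSeq b q r p n * ENNReal.ofReal (c j0 ^ (r/p)) else 0) := by
                rw [if_pos (Finset.mem_Icc.mpr ⟨hn1, hcase⟩),
                  ENNReal.ofReal_rpow_of_pos (hc0 j0)]
              rw [hterm]
              exact Finset.single_le_sum (f := fun j => (if n ∈ Finset.Icc 1 (m j) then
                gamSeq b q r p n * ENNReal.ofReal (c j ^ (r/p)) else 0))
                (fun i _ => zero_le) hj0mem
            · rw [if_neg hcase, ENNReal.zero_rpow_of_pos (by positivity : (0:ℝ) < r/p), mul_zero]
              exact zero_le
          · rw [if_neg hn1]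
            exact zero_le
        calc (∑' n : ℕ, if 1 ≤ n then
              gamSeq b q r p n * ((Finset.Icc 1 J).sup
                (fun i => if n ≤ m i then ENNReal.ofReal (c i) else 0)) ^ (r/p) else 0)
            ≤ ∑' n : ℕ, ∑ j ∈ Finset.Icc 1 J, (if n ∈ Finset.Icc 1 (m j) then
                gamSeq b q r p n * ENNReal.ofReal (c j ^ (r/p)) else 0) :=
              ENNReal.tsum_le_tsum hgb
          _ = ∑ j ∈ Finset.Icc 1 J, ∑' n : ℕ, (if n ∈ Finset.Icc 1 (m j) then
                gamSeq b q r p n * ENNReal.ofReal (c j ^ (r/p)) else 0) :=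
              Summable.tsum_finsetSum (fun j _ => ENNReal.summable)
          _ ≤ ∑ _j ∈ Finset.Icc 1 J, ENNReal.ofReal CΓ := by
              apply Finset.sum_le_sum
              intro j _
              rw [tsum_eq_sum (s := Finset.Icc 1 (m j)) (fun n hn => if_neg hn)]
              have e1 : ∑ n ∈ Finset.Icc 1 (m j), (if n ∈ Finset.Icc 1 (m j) then
                  gamSeq b q r p n * ENNReal.ofReal (c j ^ (r/p)) else 0)
                  = GamSum b q r p (m j) * ENNReal.ofReal (c j ^ (r/p)) := by
                rw [Finset.sum_congr rfl (fun n hn => if_pos hn), ← Finset.sum_mul]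
                rfl
              rw [e1, BGEaux.GamSum_eq]
              have hLmj := BGEaux.Lb_one_pos (m j)
              have h2 : ENNReal.ofReal (∑ k ∈ Finset.Icc 1 (m j),
                  (k:ℝ) ^ (r/p-1) * BGEaux.Lb 1 k ^ (-((b-1/q)*r)))
                  ≤ ENNReal.ofReal (CΓ * ((m j:ℝ)^(r/p) * BGEaux.Lb 1 (m j) ^ (-((b-1/q)*r)))) :=
                ENNReal.ofReal_le_ofReal (hCΓ (m j) (hm1 j))
              calc ENNReal.ofReal (∑ k ∈ Finset.Icc 1 (m j),
                    (k:ℝ) ^ (r/p-1) * BGEaux.Lb 1 k ^ (-((b-1/q)*r)))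
                    * ENNReal.ofReal (c j ^ (r/p))
                  ≤ ENNReal.ofReal (CΓ * ((m j:ℝ)^(r/p) * BGEaux.Lb 1 (m j) ^ (-((b-1/q)*r))))
                    * ENNReal.ofReal (c j ^ (r/p)) :=
                    mul_le_mul' h2 (le_refl _)
                _ = ENNReal.ofReal CΓ := by
                    rw [← ENNReal.ofReal_mul (by positivity)]
                    congr 1
                    rw [hcdef]
                    simp only []
                    rw [Real.div_rpow (Real.rpow_nonneg hLmj.le _) (hm0' j).le,
                      ← Real.rpow_mul hLmj.le,
                      show κ*(r/p) = (b-1/q)*r from by rw [hκdef]; field_simp,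
                      Real.rpow_neg hLmj.le]
                    have hmv : (0:ℝ) < (m j:ℝ)^(r/p) := Real.rpow_pos_of_pos (hm0' j) _
                    have hLd : (0:ℝ) < BGEaux.Lb 1 (m j) ^ ((b-1/q)*r) :=
                      Real.rpow_pos_of_pos hLmj _
                    field_simp
          _ = ENNReal.ofReal ((J:ℝ) * CΓ) := by
              rw [Finset.sum_const, Nat.card_Icc]
              simp only [Nat.add_sub_cancel, nsmul_eq_mul]
              rw [show ((J:ℕ):ℝ≥0∞) = ENNReal.ofReal (J:ℝ) from (ENNReal.ofReal_natCast _).symm,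
                ← ENNReal.ofReal_mul (by positivity)]
      -- combine
      have h1 : ENNReal.ofReal (((J:ℝ) * cstar)^(p/q))
          ≤ (∑' n : ℕ, if 1 ≤ n then
              lamSeq b q n * (∑ k ∈ Finset.Icc 1 n, (Finset.Icc 1 J).sup
                (fun i => if k ≤ m i then ENNReal.ofReal (c i) else 0)) ^ (q/p) else 0)^(p/q) := by
        rw [← ENNReal.ofReal_rpow_of_pos (show (0:ℝ) < (J:ℝ) * cstar by positivity)]
        exact ENNReal.rpow_le_rpow hLHSlow (by positivity)
      have h2 : (∑' n : ℕ, if 1 ≤ n then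
            gamSeq b q r p n * ((Finset.Icc 1 J).sup
              (fun i => if n ≤ m i then ENNReal.ofReal (c i) else 0)) ^ (r/p) else 0)^(p/r)
          ≤ ENNReal.ofReal (((J:ℝ) * CΓ)^(p/r)) := by
        rw [← ENNReal.ofReal_rpow_of_pos (show (0:ℝ) < (J:ℝ) * CΓ by positivity)]
        exact ENNReal.rpow_le_rpow hRHSup (by positivity)
      have hCr : C * ENNReal.ofReal (((J:ℝ) * CΓ)^(p/r))
          = ENNReal.ofReal (C.toReal * ((J:ℝ) * CΓ)^(p/r)) := by
        rw [ENNReal.ofReal_mul ENNReal.toReal_nonneg, ENNReal.ofReal_toReal hC]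
      have h3 : ENNReal.ofReal (((J:ℝ) * cstar)^(p/q))
          ≤ ENNReal.ofReal (C.toReal * ((J:ℝ) * CΓ)^(p/r)) := by
        refine le_trans (le_trans h1 hcontra) ?_
        refine le_trans (mul_le_mul' (le_refl C) h2) (le_of_eq hCr)
      have h4 : ((J:ℝ) * cstar)^(p/q) ≤ C.toReal * ((J:ℝ) * CΓ)^(p/r) := by
        have hrhs0 : 0 ≤ C.toReal * ((J:ℝ) * CΓ)^(p/r) := by
          have := Real.rpow_nonneg (by positivity : (0:ℝ) ≤ (J:ℝ) * CΓ) (p/r)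
          have := ENNReal.toReal_nonneg (a := C)
          positivity
        exact (ENNReal.ofReal_le_ofReal_iff hrhs0).mp h3
      -- contradiction with hJR
      have e1 : ((J:ℝ) * cstar)^(p/q) = (J:ℝ)^(p/q) * cstar^(p/q) :=
        Real.mul_rpow hJ0.le hcstar0.le
      have e2 : ((J:ℝ) * CΓ)^(p/r) = (J:ℝ)^(p/r) * CΓ^(p/r) :=
        Real.mul_rpow hJ0.le hCΓ0.le
      have e3 : (J:ℝ)^(p/q) = (J:ℝ)^(p/q - p/r) * (J:ℝ)^(p/r) := by
        rw [← Real.rpow_add hJ0]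
        congr 1
        ring
      have hcs := Real.rpow_pos_of_pos hcstar0 (p/q)
      have hJr := Real.rpow_pos_of_pos hJ0 (p/r)
      have e4 : R * cstar^(p/q) = C.toReal * CΓ^(p/r) := by
        rw [hRdef, div_mul_cancel₀ _ (ne_of_gt hcs)]
      have h5 := mul_lt_mul_of_pos_right hJR (by positivity : 0 < (J:ℝ)^(p/r) * cstar^(p/q))
      have e5 : (R * cstar^(p/q)) * (J:ℝ)^(p/r) = (C.toReal * CΓ^(p/r)) * (J:ℝ)^(p/r) := by
        rw [e4]
      have e6 : ((J:ℝ)*cstar)^(p/q) = (J:ℝ)^(p/q-p/r) * ((J:ℝ)^(p/r) * cstar^(p/q)) := by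
        rw [e1, e3]; ring
      have e7 : C.toReal * ((J:ℝ)*CΓ)^(p/r) = (C.toReal * CΓ^(p/r)) * (J:ℝ)^(p/r) := by
        rw [e2]; ring
      clear_value J R cstar ct m c κ
      nlinarith [h4, h5, e5, e6, e7]
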